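/- For p-strings x and y, where lcp∞(u,v) denotes the number of ∞ symbols in the longest common prefix of p-encodings ⟨u⟩ and ⟨v⟩, it holds that lcp∞(⟨x⟩, ⟨y⟩) ≤ lcp∞(⟨x[2..]⟩, ⟨y[2..]⟩) + 1. -/

import Mathlib

/-- Symbols of a parameterized string: static symbols `s a` (from Σs) and
parameter symbols `p a` (from Σp). -/
inductive PSym where
  | s : ℕ → PSym
  | p : ℕ → PSym
deriving DecidableEq

/-- Symbols of a p-encoded string: static symbols, finite distances, and ∞. -/
inductive Enc where
  | s : ℕ → Enc
  | fin : ℕ → Enc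
  | inf : Enc
deriving DecidableEq

/-- Order embedding: static symbols < natural numbers < ∞. -/
def Enc.toPair : Enc → ℕ ×ₗ ℕ
  | .s a => toLex (0, a)
  | .fin d => toLex (1, d)
  | .inf => toLex (2, 0)

instance : LinearOrder Enc :=
  LinearOrder.lift' Enc.toPair (by
    rintro (a | a | _) (b | b | _) h <;>
      simp_all [Enc.toPair, toLex_inj, Prod.ext_iff])

/-- Largest position `j < i` (0-based) carrying the same symbol as position `i`. -/
def prevOcc (w : List PSym) (i : ℕ) : Option ℕ :=
  ((List.range i).filter (fun j => w[j]? = w[i]?)).max?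

/-- The p-encoding of position `i` (0-based) of `w`. -/
def pencSym (w : List PSym) (i : ℕ) : Enc :=
  match w[i]? with
  | some (PSym.s a) => Enc.s a
  | some (PSym.p _) =>
    match prevOcc w i with
    | some j => Enc.fin (i - j)
    | none => Enc.inf
  | none => Enc.inf

/-- The p-encoding ⟨w⟩ of a p-string `w`. -/
def penc (w : List PSym) : List Enc :=
  (List.range w.length).map (pencSym w)

/-- Lexicographic (strict) order on p-encoded strings. -/
def lexLt (x y : List Enc) : Prop := List.Lex (· < ·) x y

def lexLe (x y : List Enc) : Prop := lexLt x y ∨ x = y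

/-- Length of the longest common prefix. -/
def lcp {α : Type*} [DecidableEq α] : List α → List α → ℕ
  | a :: x, b :: y => if a = b then lcp x y + 1 else 0
  | _, _ => 0

/-- Number of ∞'s in the longest common prefix of two p-encoded strings. -/
def lcpInf (x y : List Enc) : ℕ := (x.take (lcp x y)).count Enc.inf

/-- Number of distinct p-symbols occurring in `w` (denoted |w|_p). -/
def distinctP (w : List PSym) : ℕ :=
  (w.filterMap (fun s => match s with | PSym.p a => some a | PSym.s _ => none)).dedup.length

/-- For `w` starting with a p-symbol: the rank of `w[1]` among the distinct
p-symbols of `w[1..h+1]`, where `h+1 = min{|w|, second occurrence of w[1] in w}`. -/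
def fceRank (w : List PSym) : ℕ :=
  match w with
  | [] => 0
  | c :: rest => distinctP ((c :: rest).take (min (c :: rest).length (2 + rest.idxOf c)))

/-- The function fce from the paper; `fce ε = $` is modelled as `Enc.s 0`. -/
def fce (w : List PSym) : Enc :=
  match w with
  | [] => Enc.s 0
  | PSym.s a :: _ => Enc.s a
  | w => Enc.fin (fceRank w)


-- AUX

lemma nat_max?_eq_some_iff {l : List ℕ} {a : ℕ} :
    l.max? = some a ↔ a ∈ l ∧ ∀ b ∈ l, b ≤ a :=
  List.max?_eq_some_iff

lemma prevOcc_succ_of_tail {w : List PSym} {i j : ℕ}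
    (h : prevOcc w.tail i = some j) : prevOcc w (i+1) = some (j+1) := by
  rw [prevOcc, nat_max?_eq_some_iff] at h ⊢
  obtain ⟨h1, h2⟩ := h
  simp only [List.mem_filter, List.mem_range, decide_eq_true_eq, List.getElem?_tail] at h1 h2 ⊢
  refine ⟨⟨by omega, h1.2⟩, ?_⟩
  rintro b ⟨hb, hbe⟩
  match b with
  | 0 => omega
  | m+1 => have := h2 m ⟨by omega, hbe⟩; omega

lemma prevOcc_none_of_tail {w : List PSym} {i : ℕ}
    (h : prevOcc w.tail i = none) :
    prevOcc w (i+1) = none ∨ prevOcc w (i+1) = some 0 := by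
  rw [prevOcc, List.max?_eq_none_iff, List.filter_eq_nil_iff] at h
  simp only [List.mem_range, decide_eq_true_eq, List.getElem?_tail] at h
  rcases ho : prevOcc w (i+1) with _ | j
  · left; rfl
  · right
    rw [prevOcc, nat_max?_eq_some_iff] at ho
    simp only [List.mem_filter, List.mem_range, decide_eq_true_eq] at ho
    obtain ⟨⟨hj, hje⟩, _⟩ := ho
    match j with
    | 0 => rfl
    | m+1 => exact absurd hje (h m (by omega))

lemma pencSym_fin_le {w : List PSym} {i d : ℕ} (h : pencSym w i = Enc.fin d) :
    d ≤ i := by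
  rw [pencSym] at h
  rcases hw : w[i]? with _ | (a | a) <;> rw [hw] at h
  · exact absurd h (by simp)
  · exact absurd h (by simp)
  · rcases hp : prevOcc w i with _ | j <;> rw [hp] at h
    · exact absurd h (by simp)
    · simp only [Enc.fin.injEq] at h; omega

lemma pencSym_tail (w : List PSym) (i : ℕ) :
    pencSym w.tail i = pencSym w (i+1) ∨
      (pencSym w.tail i = Enc.inf ∧ pencSym w (i+1) = Enc.fin (i+1)) := by
  have ht : w.tail[i]? = w[i+1]? := List.getElem?_tail
  rcases hw : w[i+1]? with _ | (a | a)
  · left; rw [pencSym, pencSym, ht, hw]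
  · left; rw [pencSym, pencSym, ht, hw]
  · rcases hp : prevOcc w.tail i with _ | j
    · rcases prevOcc_none_of_tail hp with h | h
      · left; rw [pencSym, pencSym, ht, hw, hp, h]
      · right
        constructor
        · rw [pencSym, ht, hw, hp]
        · simp only [pencSym, hw, h, Nat.sub_zero]
    · left
      simp only [pencSym, ht, hw, hp, prevOcc_succ_of_tail hp]
      congr 1
      omega

lemma pencSym_step {x y : List PSym} {i : ℕ}
    (h : pencSym x (i+1) = pencSym y (i+1)) :
    pencSym x.tail i = pencSym y.tail i ∧
      (pencSym x (i+1) = Enc.inf → pencSym x.tail i = Enc.inf) := by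
  rcases pencSym_tail x i with hx | ⟨hx1, hx2⟩ <;>
    rcases pencSym_tail y i with hy | ⟨hy1, hy2⟩
  · exact ⟨by rw [hx, hy, h], fun hi => by rw [hx, hi]⟩
  · exfalso
    have : pencSym x.tail i = Enc.fin (i+1) := by rw [hx, h, hy2]
    have := pencSym_fin_le this
    omega
  · exfalso
    have : pencSym y.tail i = Enc.fin (i+1) := by rw [hy, ← h, hx2]
    have := pencSym_fin_le this
    omega
  · exact ⟨by rw [hx1, hy1], fun _ => hx1⟩

-- lcp lemmas

lemma lcp_le_length_left {α : Type*} [DecidableEq α] :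
    ∀ (a b : List α), lcp a b ≤ a.length
  | [], _ => by simp [lcp]
  | _ :: _, [] => by simp [lcp]
  | x :: a, y :: b => by
    rw [lcp]
    split
    · simpa using lcp_le_length_left a b
    · simp

lemma lcp_take {α : Type*} [DecidableEq α] :
    ∀ (a b : List α), a.take (lcp a b) = b.take (lcp a b)
  | [], _ => by simp [lcp]
  | _ :: _, [] => by simp [lcp]
  | x :: a, y :: b => by
    rw [lcp]
    split
    · next h => simp [h, lcp_take a b]
    · simp

lemma le_lcp {α : Type*} [DecidableEq α] :
    ∀ {a b : List α} {n : ℕ}, n ≤ a.length → a.take n = b.take n → n ≤ lcp a b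
  | _, _, 0, _, _ => Nat.zero_le _
  | [], _, n+1, h, _ => by simp at h
  | x :: a, [], n+1, h, he => by simp at he
  | x :: a, y :: b, n+1, h, he => by
    simp only [List.take_succ_cons, List.cons.injEq] at he
    rw [lcp, if_pos he.1]
    have := le_lcp (a := a) (b := b) (n := n) (by simpa using h) he.2
    omega

lemma penc_length (w : List PSym) : (penc w).length = w.length := by simp [penc]

lemma penc_take {w : List PSym} {n : ℕ} (h : n ≤ w.length) :
    (penc w).take n = (List.range n).map (pencSym w) := by
  rw [penc, ← List.map_take, List.take_range, min_eq_left h]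

/-- lcp∞(⟨x⟩, ⟨y⟩) ≤ lcp∞(⟨x[2..]⟩, ⟨y[2..]⟩) + 1. -/
theorem stmt3 (x y : List PSym) :
    lcpInf (penc x) (penc y) ≤ lcpInf (penc x.tail) (penc y.tail) + 1 := by
  set L := lcp (penc x) (penc y) with hLdef
  rcases Nat.eq_zero_or_eq_succ_pred L with hL | hL
  · rw [lcpInf, ← hLdef, hL]; simp
  set k := L - 1 with hk
  have hLx : L ≤ x.length := by
    have := lcp_le_length_left (penc x) (penc y); rwa [penc_length] at this
  have hLy : L ≤ y.length := by
    have h1 := lcp_take (penc x) (penc y)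
    have : ((penc y).take L).length = L := by
      rw [← h1, List.length_take, penc_length]; omega
    rw [List.length_take, penc_length] at this; omega
  have hxpos : 1 ≤ x.length := by omega
  have hypos : 1 ≤ y.length := by omega
  -- pointwise equality on the common prefix
  have heq : ∀ i < L, pencSym x i = pencSym y i := by
    intro i hi
    have h1 := lcp_take (penc x) (penc y)
    rw [penc_take hLx, penc_take hLy] at h1
    have := congrArg (fun l => l[i]?) h1
    simpa [List.getElem?_map, List.getElem?_range, hi] using this
  -- tail prefix equality of length k
  have hktx : k ≤ x.tail.length := by rw [List.length_tail]; omega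
  have hkty : k ≤ y.tail.length := by rw [List.length_tail]; omega
  have htake : (penc x.tail).take k = (penc y.tail).take k := by
    rw [penc_take hktx, penc_take hkty]
    apply List.map_congr_left
    intro i hi
    rw [List.mem_range] at hi
    exact (pencSym_step (heq (i+1) (by omega))).1
  have hk_le : k ≤ lcp (penc x.tail) (penc y.tail) :=
    le_lcp (by rw [penc_length]; exact hktx) htake
  set L' := lcp (penc x.tail) (penc y.tail) with hL'def
  have hL'x : L' ≤ x.tail.length := by
    have := lcp_le_length_left (penc x.tail) (penc y.tail)
    rwa [penc_length] at this
  -- count computations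
  rw [lcpInf, lcpInf, ← hLdef, ← hL'def, penc_take hLx, penc_take hL'x]
  rw [List.count_eq_countP, List.count_eq_countP, List.countP_map, List.countP_map]
  have hrangeL : List.range L = 0 :: (List.range k).map Nat.succ := by
    rw [hL]; exact List.range_succ_eq_map
  rw [hrangeL, List.countP_cons, List.countP_map]
  simp only [Function.comp_def]
  have hmono : List.countP (fun i => pencSym x (Nat.succ i) == Enc.inf) (List.range k)
      ≤ List.countP (fun i => pencSym x.tail i == Enc.inf) (List.range L') := by
    calc List.countP (fun i => pencSym x (Nat.succ i) == Enc.inf) (List.range k)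
        ≤ List.countP (fun i => pencSym x.tail i == Enc.inf) (List.range k) := by
          apply List.countP_mono_left
          intro i hi h
          rw [List.mem_range] at hi
          simp only [beq_iff_eq] at h ⊢
          exact (pencSym_step (heq (i+1) (by omega))).2 h
      _ ≤ List.countP (fun i => pencSym x.tail i == Enc.inf) (List.range L') :=
          List.Sublist.countP_le (List.range_sublist.mpr hk_le)
  split <;> omega
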